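/- Every compact metric space F with dim F ≥ 2 admits a closed subset A ⊆ F and a continuous map f : A → S¹ that does not extend to a continuous map F → S¹. -/

import Mathlib

/-- `CovDimLE X n` : the Lebesgue covering dimension of `X` is at most `n`, i.e. every
finite open cover of `X` admits a finite open refinement (still covering `X`) of order
at most `n + 1` (every point belongs to at most `n + 1` members). -/
def CovDimLE (X : Type*) [TopologicalSpace X] (n : ℕ) : Prop :=
  ∀ U : Finset (Set X), (∀ u ∈ U, IsOpen u) → ⋃₀ (U : Set (Set X)) = Set.univ →
    ∃ V : Finset (Set X), (∀ v ∈ V, IsOpen v) ∧ ⋃₀ (V : Set (Set X)) = Set.univ ∧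
      (∀ v ∈ V, ∃ u ∈ U, v ⊆ u) ∧
      ∀ x : X, {v ∈ (V : Set (Set X)) | x ∈ v}.ncard ≤ n + 1


noncomputable section CircleDimAux
open Set Metric Complex

namespace CircleDimAux

def ee2 : ℂ := ⟨-(1/2), Real.sqrt 3 / 2⟩
def ee3 : ℂ := ⟨-(1/2), -(Real.sqrt 3 / 2)⟩
def qq (w z : ℂ) : ℝ := -(z * (starRingEnd ℂ) w).re
def mm (z : ℂ) : ℝ := max (qq 1 z) (max (qq ee2 z) (qq ee3 z))
def mu (w z : ℂ) : ℝ := 1/3 - (2/3) * qq w z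

lemma qq_one (z : ℂ) : qq 1 z = -z.re := by simp [qq]
lemma qq_ee2 (z : ℂ) : qq ee2 z = z.re/2 - z.im * (Real.sqrt 3 / 2) := by
  simp [qq, ee2, Complex.mul_re, Complex.conj_re, Complex.conj_im]; ring
lemma qq_ee3 (z : ℂ) : qq ee3 z = z.re/2 + z.im * (Real.sqrt 3 / 2) := by
  simp [qq, ee3, Complex.mul_re, Complex.conj_re, Complex.conj_im]; ring
lemma continuous_qq (w : ℂ) : Continuous (qq w) := by unfold qq; fun_prop
lemma continuous_mm : Continuous mm :=
  (continuous_qq 1).max ((continuous_qq ee2).max (continuous_qq ee3))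
lemma continuous_mu (w : ℂ) : Continuous (mu w) :=
  continuous_const.sub (continuous_const.mul (continuous_qq w))
lemma qq_smul (w : ℂ) (r : ℝ) (z : ℂ) : qq w ((r : ℂ) * z) = r * qq w z := by
  simp [qq, mul_assoc, Complex.re_ofReal_mul]; ring
lemma mm_smul (r : ℝ) (hr : 0 ≤ r) (z : ℂ) : mm ((r : ℂ) * z) = r * mm z := by
  unfold mm
  rw [qq_smul, qq_smul, qq_smul, mul_max_of_nonneg _ _ hr, mul_max_of_nonneg _ _ hr]
lemma qq_sum (z : ℂ) : qq 1 z + qq ee2 z + qq ee3 z = 0 := by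
  rw [qq_one, qq_ee2, qq_ee3]; ring
lemma mu_sum (z : ℂ) : mu 1 z + mu ee2 z + mu ee3 z = 1 := by
  unfold mu; have := qq_sum z; linarith
lemma mm_pos (z : ℂ) (hz : z ≠ 0) : 0 < mm z := by
  by_contra hle
  push_neg at hle
  have h1 : qq 1 z ≤ 0 := le_trans (le_max_left _ _) hle
  have h2 : qq ee2 z ≤ 0 := le_trans (le_trans (le_max_left _ _) (le_max_right _ _)) hle
  have h3 : qq ee3 z ≤ 0 := le_trans (le_trans (le_max_right _ _) (le_max_right _ _)) hle
  rw [qq_one] at h1; rw [qq_ee2] at h2; rw [qq_ee3] at h3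
  have hs : 0 < Real.sqrt 3 := Real.sqrt_pos.2 (by norm_num)
  apply hz
  have hre : z.re = 0 := by linarith
  have him : z.im = 0 := by rw [hre] at h2 h3; nlinarith
  exact Complex.ext hre him
lemma mm_zero : mm 0 = 0 := by simp [mm, qq]

variable {F : Type*} [MetricSpace F]

/-- Main analytic step: the extension property for circle-valued maps implies that every
3-element open cover has an open shrinking with empty total intersection. -/
lemma shrink3
    (hext : ∀ A : Set F, IsClosed A → ∀ f : A → Circle, Continuous f →
      ∃ g : F → Circle, Continuous g ∧ ∀ a : A, g a = f a)
    (U1 U2 U3 : Set F) (h1 : IsOpen U1) (h2 : IsOpen U2) (h3 : IsOpen U3)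
    (hcov : U1 ∪ U2 ∪ U3 = univ) :
    ∃ V1 V2 V3 : Set F, IsOpen V1 ∧ IsOpen V2 ∧ IsOpen V3 ∧
      V1 ⊆ U1 ∧ V2 ⊆ U2 ∧ V3 ⊆ U3 ∧ V1 ∪ V2 ∪ V3 = univ ∧ V1 ∩ V2 ∩ V3 = ∅ := by
  -- dispose of the degenerate cases where some `Uᵢ = univ`
  by_cases hU1 : U1 = univ
  · exact ⟨univ, ∅, ∅, isOpen_univ, isOpen_empty, isOpen_empty, hU1 ▸ subset_rfl,
      empty_subset _, empty_subset _, by simp, by simp⟩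
  by_cases hU2 : U2 = univ
  · exact ⟨∅, univ, ∅, isOpen_empty, isOpen_univ, isOpen_empty, empty_subset _,
      hU2 ▸ subset_rfl, empty_subset _, by simp, by simp⟩
  by_cases hU3 : U3 = univ
  · exact ⟨∅, ∅, univ, isOpen_empty, isOpen_empty, isOpen_univ, empty_subset _,
      empty_subset _, hU3 ▸ subset_rfl, by simp, by simp⟩
  have hne1 : U1ᶜ.Nonempty := nonempty_compl.2 hU1
  have hne2 : U2ᶜ.Nonempty := nonempty_compl.2 hU2
  have hne3 : U3ᶜ.Nonempty := nonempty_compl.2 hU3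
  -- distance functions
  set d1 : F → ℝ := fun x => infDist x U1ᶜ with hd1
  set d2 : F → ℝ := fun x => infDist x U2ᶜ with hd2
  set d3 : F → ℝ := fun x => infDist x U3ᶜ with hd3
  have hd1c : Continuous d1 := continuous_infDist_pt _
  have hd2c : Continuous d2 := continuous_infDist_pt _
  have hd3c : Continuous d3 := continuous_infDist_pt _
  have hd1z : ∀ x, x ∉ U1 → d1 x = 0 := fun x hx => infDist_zero_of_mem hx
  have hd2z : ∀ x, x ∉ U2 → d2 x = 0 := fun x hx => infDist_zero_of_mem hx
  have hd3z : ∀ x, x ∉ U3 → d3 x = 0 := fun x hx => infDist_zero_of_mem hx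
  have hd1p : ∀ x, x ∈ U1 → 0 < d1 x := fun x hx =>
    (h1.isClosed_compl.notMem_iff_infDist_pos hne1).1 (by simpa using hx)
  have hd2p : ∀ x, x ∈ U2 → 0 < d2 x := fun x hx =>
    (h2.isClosed_compl.notMem_iff_infDist_pos hne2).1 (by simpa using hx)
  have hd3p : ∀ x, x ∈ U3 → 0 < d3 x := fun x hx =>
    (h3.isClosed_compl.notMem_iff_infDist_pos hne3).1 (by simpa using hx)
  have hd1n : ∀ x, 0 ≤ d1 x := fun x => infDist_nonneg
  have hd2n : ∀ x, 0 ≤ d2 x := fun x => infDist_nonneg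
  have hd3n : ∀ x, 0 ≤ d3 x := fun x => infDist_nonneg
  set s : F → ℝ := fun x => d1 x + d2 x + d3 x with hs
  have hsp : ∀ x, 0 < s x := by
    intro x
    have hx : x ∈ U1 ∪ U2 ∪ U3 := hcov ▸ mem_univ x
    rcases hx with (hx | hx) | hx
    · have := hd1p x hx; have := hd2n x; have := hd3n x; simp only [hs]; linarith
    · have := hd2p x hx; have := hd1n x; have := hd3n x; simp only [hs]; linarith
    · have := hd3p x hx; have := hd1n x; have := hd2n x; simp only [hs]; linarith
  have hsne : ∀ x, s x ≠ 0 := fun x => ne_of_gt (hsp x)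
  set lam1 : F → ℝ := fun x => d1 x / s x with hlam1
  set lam2 : F → ℝ := fun x => d2 x / s x with hlam2
  set lam3 : F → ℝ := fun x => d3 x / s x with hlam3
  have hlsum : ∀ x, lam1 x + lam2 x + lam3 x = 1 := by
    intro x
    show d1 x / s x + d2 x / s x + d3 x / s x = 1
    rw [← add_div, ← add_div]
    exact div_self (hsne x)
  have hlc1 : Continuous lam1 := hd1c.div (hd1c.add hd2c |>.add hd3c) hsne
  have hlc2 : Continuous lam2 := hd2c.div (hd1c.add hd2c |>.add hd3c) hsne
  have hlc3 : Continuous lam3 := hd3c.div (hd1c.add hd2c |>.add hd3c) hsne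
  -- map to the triangle
  set f : F → ℂ := fun x => (lam1 x : ℂ) * 1 + (lam2 x : ℂ) * ee2 + (lam3 x : ℂ) * ee3 with hf
  have hfc : Continuous f := by
    apply Continuous.add
    apply Continuous.add
    · exact (Complex.continuous_ofReal.comp hlc1).mul continuous_const
    · exact (Complex.continuous_ofReal.comp hlc2).mul continuous_const
    · exact (Complex.continuous_ofReal.comp hlc3).mul continuous_const
  have hs3 : Real.sqrt 3 * Real.sqrt 3 = 3 := Real.mul_self_sqrt (by norm_num)
  have hfre : ∀ x, (f x).re = lam1 x - lam2 x / 2 - lam3 x / 2 := by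
    intro x
    simp [hf, ee2, ee3, Complex.add_re, Complex.mul_re]
    ring
  have hfim : ∀ x, (f x).im = lam2 x * (Real.sqrt 3 / 2) - lam3 x * (Real.sqrt 3 / 2) := by
    intro x
    simp [hf, ee2, ee3, Complex.add_im, Complex.mul_im]
    ring
  have hmu1 : ∀ x, mu 1 (f x) = lam1 x := by
    intro x
    have h := hlsum x
    rw [mu, qq_one, hfre x]
    linarith
  have hmu2 : ∀ x, mu ee2 (f x) = lam2 x := by
    intro x
    have h := hlsum x
    rw [mu, qq_ee2, hfre x, hfim x]
    linear_combination ((lam2 x - lam3 x)/6) * hs3 - (1/3) * h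
  have hmu3 : ∀ x, mu ee3 (f x) = lam3 x := by
    intro x
    have h := hlsum x
    rw [mu, qq_ee3, hfre x, hfim x]
    linear_combination ((lam3 x - lam2 x)/6) * hs3 - (1/3) * h
  -- the closed set where `f` hits the small triangle's boundary
  set A : Set F := {x | mm (f x) = 1/8} with hA
  have hAc : IsClosed A := isClosed_eq (continuous_mm.comp hfc) continuous_const
  have hfxne : ∀ x, x ∈ A → f x ≠ 0 := by
    intro x hx h0
    rw [hA, mem_setOf_eq, h0, mm_zero] at hx
    norm_num at hx
  have hnormne : ∀ a : A, ‖f ↑a‖ ≠ 0 := fun a => norm_ne_zero_iff.2 (hfxne _ a.2)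
  set φ : A → Circle := fun a => ⟨(↑(‖f ↑a‖⁻¹) : ℂ) * f ↑a, by
    show _ ∈ Metric.sphere (0:ℂ) 1
    rw [mem_sphere_zero_iff_norm, norm_mul, Complex.norm_real, Real.norm_eq_abs,
      _root_.abs_of_nonneg (by positivity)]
    exact inv_mul_cancel₀ (hnormne a)⟩ with hφ
  have hφc : Continuous φ := by
    apply Continuous.subtype_mk
    exact (Complex.continuous_ofReal.comp
      (((hfc.comp continuous_subtype_val).norm).inv₀ hnormne)).mul
      (hfc.comp continuous_subtype_val)
  obtain ⟨g, hgc, hgext⟩ := hext A hAc φ hφc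
  have hmg : ∀ x : F, 0 < mm ((g x : ℂ)) := fun x => mm_pos _ (Circle.coe_ne_zero _)
  have hmgne : ∀ x : F, (8 * mm ((g x : ℂ))) ≠ 0 := fun x => ne_of_gt (mul_pos (by norm_num) (hmg x))
  set f' : F → ℂ := fun x =>
      if mm (f x) ≤ 1/8 then (↑((8 * mm ((g x : ℂ)))⁻¹) : ℂ) * (g x : ℂ) else f x with hf'
  have hgcoe : Continuous fun x : F => (g x : ℂ) := continuous_subtype_val.comp hgc
  have hagree : ∀ x : F, mm (f x) = 1/8 →
      (↑((8 * mm ((g x : ℂ)))⁻¹) : ℂ) * (g x : ℂ) = f x := by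
    intro x hx
    have hxa : x ∈ A := hx
    have hgx' : (g x : ℂ) = (↑(‖f x‖⁻¹) : ℂ) * f x := by
      have h1 := hgext ⟨x, hxa⟩
      have h2 := congrArg (fun z : Circle => (z : ℂ)) h1
      simpa [hφ] using h2
    have hmm : mm ((g x : ℂ)) = ‖f x‖⁻¹ * (1/8) := by
      rw [hgx', mm_smul _ (by positivity) _, hx]
    have hnz : ‖f x‖ ≠ 0 := norm_ne_zero_iff.2 (hfxne x hxa)
    rw [hmm, hgx']
    rw [← mul_assoc, ← Complex.ofReal_mul]
    have : (8 * (‖f x‖⁻¹ * (1 / 8)))⁻¹ * ‖f x‖⁻¹ = 1 := by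
      field_simp
    rw [this, Complex.ofReal_one, one_mul]
  have hf'c : Continuous f' := by
    rw [hf']
    apply Continuous.if_le
    · exact (Complex.continuous_ofReal.comp
        ((continuous_const.mul (continuous_mm.comp hgcoe)).inv₀ hmgne)).mul hgcoe
    · exact hfc
    · exact continuous_mm.comp hfc
    · exact continuous_const
    · exact fun x hx => hagree x hx
  have hP1 : ∀ x : F, 1/8 ≤ mm (f' x) := by
    intro x
    by_cases h : mm (f x) ≤ 1/8
    · simp only [hf']
      rw [if_pos h, mm_smul _ (inv_nonneg.2 (le_of_lt (mul_pos (by norm_num) (hmg x)))) _]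
      have hpos := hmg x
      have heq : (8 * mm ((g x : ℂ)))⁻¹ * mm ((g x : ℂ)) = 1/8 := by
        rw [mul_inv, mul_assoc, inv_mul_cancel₀ hpos.ne', mul_one]
        norm_num
      rw [heq]
    · simp only [hf']
      rw [if_neg h]
      linarith [not_le.1 h]
  -- if x ∉ Uᵢ then the i-th barycentric coordinate of f' x vanishes
  have key : ∀ x : F, ∀ w : ℂ, qq w (f x) ≤ mm (f x) → mu w (f x) = 0 → mu w (f' x) = 0 := by
    intro x w hle hmu0
    have hq : qq w (f x) = 1/2 := by
      rw [mu] at hmu0; linarith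
    have hgt : ¬ (mm (f x) ≤ 1/8) := by
      rw [hq] at hle; intro hcon; linarith
    simp only [hf']
    rw [if_neg hgt]
    exact hmu0
  have hmax1 : ∀ z : ℂ, qq 1 z ≤ mm z := fun z => le_max_left _ _
  have hmax2 : ∀ z : ℂ, qq ee2 z ≤ mm z := fun z =>
    le_trans (le_max_left _ _) (le_max_right _ _)
  have hmax3 : ∀ z : ℂ, qq ee3 z ≤ mm z := fun z =>
    le_trans (le_max_right _ _) (le_max_right _ _)
  have hlam1z : ∀ x, x ∉ U1 → mu 1 (f' x) = 0 := by
    intro x hx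
    refine key x 1 (hmax1 _) ?_
    rw [hmu1, hlam1]
    simp [hd1z x hx]
  have hlam2z : ∀ x, x ∉ U2 → mu ee2 (f' x) = 0 := by
    intro x hx
    refine key x ee2 (hmax2 _) ?_
    rw [hmu2, hlam2]
    simp [hd2z x hx]
  have hlam3z : ∀ x, x ∉ U3 → mu ee3 (f' x) = 0 := by
    intro x hx
    refine key x ee3 (hmax3 _) ?_
    rw [hmu3, hlam3]
    simp [hd3z x hx]
  -- the shrinking
  refine ⟨{x | 1/4 < mu 1 (f' x)}, {x | 1/4 < mu ee2 (f' x)}, {x | 1/4 < mu ee3 (f' x)},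
    ?_, ?_, ?_, ?_, ?_, ?_, ?_, ?_⟩
  · exact isOpen_lt continuous_const ((continuous_mu 1).comp hf'c)
  · exact isOpen_lt continuous_const ((continuous_mu ee2).comp hf'c)
  · exact isOpen_lt continuous_const ((continuous_mu ee3).comp hf'c)
  · intro x hx
    by_contra hn
    rw [mem_setOf_eq, hlam1z x hn] at hx
    norm_num at hx
  · intro x hx
    by_contra hn
    rw [mem_setOf_eq, hlam2z x hn] at hx
    norm_num at hx
  · intro x hx
    by_contra hn
    rw [mem_setOf_eq, hlam3z x hn] at hx
    norm_num at hx
  · apply eq_univ_of_forall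
    intro x
    by_contra hn
    simp only [mem_union, mem_setOf_eq, not_or, not_lt] at hn
    obtain ⟨⟨hn1, hn2⟩, hn3⟩ := hn
    have := mu_sum (f' x)
    linarith
  · apply eq_empty_iff_forall_notMem.2
    intro x hx
    obtain ⟨⟨hx1, hx2⟩, hx3⟩ := hx
    rw [mem_setOf_eq] at hx1 hx2 hx3
    have q1 : qq 1 (f' x) < 1/8 := by rw [mu] at hx1; linarith
    have q2 : qq ee2 (f' x) < 1/8 := by rw [mu] at hx2; linarith
    have q3 : qq ee3 (f' x) < 1/8 := by rw [mu] at hx3; linarith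
    have : mm (f' x) < 1/8 := by
      rw [mm]
      exact max_lt q1 (max_lt q2 q3)
    linarith [hP1 x]

end CircleDimAux

section Comb
open Set

variable {F : Type*} [TopologicalSpace F]

/-- One step: kill the intersection of three distinct members of an open cover. -/
lemma shrink_step
    (P3 : ∀ U1 U2 U3 : Set F, IsOpen U1 → IsOpen U2 → IsOpen U3 → U1 ∪ U2 ∪ U3 = univ →
      ∃ V1 V2 V3 : Set F, IsOpen V1 ∧ IsOpen V2 ∧ IsOpen V3 ∧
        V1 ⊆ U1 ∧ V2 ⊆ U2 ∧ V3 ⊆ U3 ∧ V1 ∪ V2 ∪ V3 = univ ∧ V1 ∩ V2 ∩ V3 = ∅)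
    {ι : Type*} [DecidableEq ι] (W : ι → Set F) (hW : ∀ m, IsOpen (W m))
    (hcov : ⋃ m, W m = univ) (i j l : ι) (hij : i ≠ j) (hil : i ≠ l) (hjl : j ≠ l) :
    ∃ W' : ι → Set F, (∀ m, IsOpen (W' m)) ∧ (⋃ m, W' m = univ) ∧ (∀ m, W' m ⊆ W m) ∧
      W' i ∩ W' j ∩ W' l = ∅ := by
  set G3 : Set F := ⋃ m ∈ {m : ι | m ≠ i ∧ m ≠ j}, W m with hG3
  have hG3o : IsOpen G3 := isOpen_biUnion fun m _ => hW m
  have hcov3 : W i ∪ W j ∪ G3 = univ := by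
    apply eq_univ_of_forall
    intro x
    have hx : x ∈ ⋃ m, W m := hcov ▸ mem_univ x
    obtain ⟨m, hm⟩ := mem_iUnion.1 hx
    by_cases hmi : m = i
    · exact Or.inl (Or.inl (hmi ▸ hm))
    by_cases hmj : m = j
    · exact Or.inl (Or.inr (hmj ▸ hm))
    · exact Or.inr (mem_biUnion ⟨hmi, hmj⟩ hm)
  obtain ⟨V1, V2, V3, hV1o, hV2o, hV3o, hV1s, hV2s, hV3s, hVcov, hVint⟩ :=
    P3 (W i) (W j) G3 (hW i) (hW j) hG3o hcov3
  refine ⟨fun m => if m = i then V1 else if m = j then V2 else V3 ∩ W m, ?_, ?_, ?_, ?_⟩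
  · intro m
    dsimp only
    by_cases hmi : m = i
    · rw [if_pos hmi]; exact hV1o
    by_cases hmj : m = j
    · rw [if_neg hmi, if_pos hmj]; exact hV2o
    · rw [if_neg hmi, if_neg hmj]; exact hV3o.inter (hW m)
  · apply eq_univ_of_forall
    intro x
    have hx : x ∈ V1 ∪ V2 ∪ V3 := hVcov ▸ mem_univ x
    rcases hx with (hx | hx) | hx
    · exact mem_iUnion.2 ⟨i, by simp [hx]⟩
    · exact mem_iUnion.2 ⟨j, by simp [hij.symm, hx]⟩
    · have := hV3s hx
      obtain ⟨m, hm, hxm⟩ := by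
        simpa only [hG3, mem_iUnion, exists_prop] using this
      exact mem_iUnion.2 ⟨m, by simp [hm.1, hm.2, hxm, hx]⟩
  · intro m x hx
    dsimp only at hx
    by_cases hmi : m = i
    · subst hmi; simp only [if_pos rfl] at hx; exact hV1s hx
    by_cases hmj : m = j
    · subst hmj; simp only [if_neg hmi, if_pos rfl] at hx; exact hV2s hx
    · simp only [if_neg hmi, if_neg hmj] at hx; exact hx.2
  · apply eq_empty_iff_forall_notMem.2
    intro x hx
    obtain ⟨⟨hx1, hx2⟩, hx3⟩ := hx
    simp only [if_pos rfl] at hx1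
    simp only [if_neg (Ne.symm hij), if_pos rfl] at hx2
    simp only [if_neg (Ne.symm hil), if_neg (Ne.symm hjl)] at hx3
    exact (eq_empty_iff_forall_notMem.1 hVint) x ⟨⟨hx1, hx2⟩, hx3.1⟩

/-- Iterate over all triples. -/
lemma shrink_finset
    (P3 : ∀ U1 U2 U3 : Set F, IsOpen U1 → IsOpen U2 → IsOpen U3 → U1 ∪ U2 ∪ U3 = univ →
      ∃ V1 V2 V3 : Set F, IsOpen V1 ∧ IsOpen V2 ∧ IsOpen V3 ∧
        V1 ⊆ U1 ∧ V2 ⊆ U2 ∧ V3 ⊆ U3 ∧ V1 ∪ V2 ∪ V3 = univ ∧ V1 ∩ V2 ∩ V3 = ∅)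
    {ι : Type*} [DecidableEq ι] (S : Finset (ι × ι × ι)) :
    ∀ W : ι → Set F, (∀ m, IsOpen (W m)) → (⋃ m, W m = univ) →
    ∃ W' : ι → Set F, (∀ m, IsOpen (W' m)) ∧ (⋃ m, W' m = univ) ∧ (∀ m, W' m ⊆ W m) ∧
      ∀ p ∈ S, p.1 ≠ p.2.1 → p.1 ≠ p.2.2 → p.2.1 ≠ p.2.2 →
        W' p.1 ∩ W' p.2.1 ∩ W' p.2.2 = ∅ := by
  induction S using Finset.induction_on with
  | empty =>
    intro W hW hcov
    exact ⟨W, hW, hcov, fun m => subset_rfl, fun p hp => absurd hp (Finset.notMem_empty p)⟩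
  | insert _ _ hnp ih =>
    rename_i p S
    intro W hW hcov
    obtain ⟨W', hW'o, hW'c, hW's, hW'p⟩ := ih W hW hcov
    by_cases hd : p.1 ≠ p.2.1 ∧ p.1 ≠ p.2.2 ∧ p.2.1 ≠ p.2.2
    · obtain ⟨W'', hW''o, hW''c, hW''s, hW''p⟩ :=
        shrink_step P3 W' hW'o hW'c p.1 p.2.1 p.2.2 hd.1 hd.2.1 hd.2.2
      refine ⟨W'', hW''o, hW''c, fun m => (hW''s m).trans (hW's m), ?_⟩
      intro q hq h1 h2 h3
      rcases Finset.mem_insert.1 hq with hq | hq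
      · subst hq; exact hW''p
      · have := hW'p q hq h1 h2 h3
        apply eq_empty_iff_forall_notMem.2
        intro x hx
        exact (eq_empty_iff_forall_notMem.1 this) x
          ⟨⟨hW''s _ hx.1.1, hW''s _ hx.1.2⟩, hW''s _ hx.2⟩
    · refine ⟨W', hW'o, hW'c, hW's, ?_⟩
      intro q hq h1 h2 h3
      rcases Finset.mem_insert.1 hq with hq | hq
      · subst hq; exact absurd ⟨h1, h2, h3⟩ hd
      · exact hW'p q hq h1 h2 h3

end Comb

/-- Every compact metric space `F` with `dim F ≥ 2` admits a closed
subset `A ⊆ F` and a continuous map `f : A → S¹` that does not extend to a continuous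
map `F → S¹`. -/
theorem exists_nonextendable_circle_map_of_dim_ge_two
    {F : Type*} [MetricSpace F] [CompactSpace F] (hF : ¬ CovDimLE F 1) :
    ∃ A : Set F, IsClosed A ∧ ∃ f : A → Circle, Continuous f ∧
      ¬ ∃ g : F → Circle, Continuous g ∧ ∀ a : A, g a = f a := by
  classical
  by_contra hcon
  push_neg at hcon
  apply hF
  intro U hUo hUcov
  have P3 : ∀ U1 U2 U3 : Set F, IsOpen U1 → IsOpen U2 → IsOpen U3 →
      U1 ∪ U2 ∪ U3 = Set.univ →
      ∃ V1 V2 V3 : Set F, IsOpen V1 ∧ IsOpen V2 ∧ IsOpen V3 ∧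
        V1 ⊆ U1 ∧ V2 ⊆ U2 ∧ V3 ⊆ U3 ∧ V1 ∪ V2 ∪ V3 = Set.univ ∧ V1 ∩ V2 ∩ V3 = ∅ :=
    fun U1 U2 U3 h1 h2 h3 hc => CircleDimAux.shrink3 hcon U1 U2 U3 h1 h2 h3 hc
  set ι := {u : Set F // u ∈ (U : Set (Set F))} with hι
  haveI : Fintype ι := U.finite_toSet.fintype
  set W : ι → Set F := fun u => u.1 with hWdef
  have hW : ∀ m : ι, IsOpen (W m) := fun m => hUo m.1 m.2
  have hcovW : ⋃ m : ι, W m = Set.univ := by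
    rw [← hUcov, Set.sUnion_eq_iUnion]
  obtain ⟨W', hW'o, hW'c, hW's, hW'p⟩ :=
    shrink_finset P3 (Finset.univ : Finset (ι × ι × ι)) W hW hcovW
  refine ⟨Finset.univ.image W', ?_, ?_, ?_, ?_⟩
  · intro v hv
    obtain ⟨i, _, rfl⟩ := Finset.mem_image.1 hv
    exact hW'o i
  · rw [Finset.coe_image, Finset.coe_univ, Set.image_univ, Set.sUnion_range]
    exact hW'c
  · intro v hv
    obtain ⟨i, _, rfl⟩ := Finset.mem_image.1 hv
    exact ⟨W i, i.2, hW's i⟩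
  · intro x
    by_contra hgt
    rw [not_le] at hgt
    have hfin : {v ∈ (↑(Finset.univ.image W') : Set (Set F)) | x ∈ v}.Finite :=
      (Finset.univ.image W').finite_toSet.subset (Set.sep_subset _ _)
    have h2 : 2 < {v ∈ (↑(Finset.univ.image W') : Set (Set F)) | x ∈ v}.ncard := by
      omega
    obtain ⟨a, ha, b, hb, c, hc, hab, hac, hbc⟩ := (Set.two_lt_ncard hfin).1 h2
    obtain ⟨⟨haV, hax⟩, ⟨hbV, hbx⟩, ⟨hcV, hcx⟩⟩ := And.intro ha (And.intro hb hc)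
    obtain ⟨ia, -, rfl⟩ := Finset.mem_image.1 (Finset.mem_coe.1 haV)
    obtain ⟨ib, -, rfl⟩ := Finset.mem_image.1 (Finset.mem_coe.1 hbV)
    obtain ⟨ic, -, rfl⟩ := Finset.mem_image.1 (Finset.mem_coe.1 hcV)
    have hiab : ia ≠ ib := fun h => hab (by rw [h])
    have hiac : ia ≠ ic := fun h => hac (by rw [h])
    have hibc : ib ≠ ic := fun h => hbc (by rw [h])
    have hempty := hW'p (ia, ib, ic) (Finset.mem_univ _) hiab hiac hibc
    exact (Set.eq_empty_iff_forall_notMem.1 hempty) x ⟨⟨hax, hbx⟩, hcx⟩
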